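/- Let σ ∈ (0,1) and α > 0. Define G(m) = 1 − m + (1 − e^{−α(1−σ)m})/(α(1−σ)) for m ∈ [0,1]. Then G is continuous and strictly decreasing on [0,1] with G(0) = 1 and G(1) ∈ (0,1), and for every c > 1 with c^{σ−1} > G(1) there exists a unique m̄(c) ∈ (0,1) satisfying c^{1−σ}·[ 1 − m̄(c) + (e^{α(σ−1)·m̄(c)} − 1)/(α(σ−1)) ] = 1. Moreover, m̄ is strictly increasing: if 1 < c₁ < c₂ and both satisfy the above range condition, then m̄(c₁) < m̄(c₂). -/

import Mathlib

/-- Lemma 1 of the paper: the boundary automation measure m̄(c) ∈ (0,1) exists, is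
unique, and is strictly increasing in the effective cost of capital c. -/
theorem boundary_automation_measure
    (σ α : ℝ) (hσ : σ ∈ Set.Ioo (0:ℝ) 1) (hα : 0 < α)
    (G : ℝ → ℝ)
    (hG : ∀ m, G m = 1 - m + (1 - Real.exp (-α * (1 - σ) * m)) / (α * (1 - σ))) :
    ContinuousOn G (Set.Icc 0 1) ∧
    StrictAntiOn G (Set.Icc 0 1) ∧
    G 0 = 1 ∧
    G 1 ∈ Set.Ioo (0:ℝ) 1 ∧
    (∀ c : ℝ, 1 < c → G 1 < c ^ (σ - 1) →
      ∃! m : ℝ, m ∈ Set.Ioo (0:ℝ) 1 ∧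
        c ^ (1 - σ) * (1 - m + (Real.exp (α * (σ - 1) * m) - 1) / (α * (σ - 1))) = 1) ∧
    (∀ c₁ c₂ m₁ m₂ : ℝ, 1 < c₁ → c₁ < c₂ →
      G 1 < c₁ ^ (σ - 1) → G 1 < c₂ ^ (σ - 1) →
      m₁ ∈ Set.Ioo (0:ℝ) 1 → m₂ ∈ Set.Ioo (0:ℝ) 1 →
      c₁ ^ (1 - σ) * (1 - m₁ + (Real.exp (α * (σ - 1) * m₁) - 1) / (α * (σ - 1))) = 1 →
      c₂ ^ (1 - σ) * (1 - m₂ + (Real.exp (α * (σ - 1) * m₂) - 1) / (α * (σ - 1))) = 1 →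
      m₁ < m₂) := by
  obtain ⟨hσ0, hσ1⟩ := hσ
  set k : ℝ := α * (1 - σ) with hkdef
  have hkpos : 0 < k := mul_pos hα (by linarith)
  have hkne : k ≠ 0 := ne_of_gt hkpos
  have hGk : ∀ m, G m = 1 - m + (1 - Real.exp (-(k * m))) / k := by
    intro m
    rw [hG]
    have : -α * (1 - σ) * m = -(k * m) := by rw [hkdef]; ring
    rw [this]
  -- derivative
  have hderiv : ∀ m : ℝ, HasDerivAt G (Real.exp (-(k * m)) - 1) m := by
    intro m
    have h1 : HasDerivAt (fun x : ℝ => -(k * x)) (-k) m := by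
      have h0 := ((hasDerivAt_id m).const_mul k).neg
      simp only [id, mul_one] at h0
      exact h0
    have h2 : HasDerivAt (fun x : ℝ => Real.exp (-(k * x)))
        (Real.exp (-(k * m)) * (-k)) m := (Real.hasDerivAt_exp _).comp m h1
    have h3 : HasDerivAt (fun x : ℝ => 1 - x + (1 - Real.exp (-(k * x))) / k)
        (-1 + -(Real.exp (-(k * m)) * (-k)) / k) m :=
      ((hasDerivAt_id m).const_sub 1).add ((h2.const_sub 1).div_const k)
    have hGeq : G = fun x : ℝ => 1 - x + (1 - Real.exp (-(k * x))) / k := funext hGk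
    rw [hGeq]
    convert h3 using 1
    field_simp
    ring
  have hcont : ContinuousOn G (Set.Icc 0 1) :=
    fun m _ => (hderiv m).continuousAt.continuousWithinAt
  have hanti : StrictAntiOn G (Set.Icc 0 1) := by
    apply strictAntiOn_of_deriv_neg (convex_Icc 0 1) hcont
    intro m hm
    rw [interior_Icc] at hm
    rw [(hderiv m).deriv]
    have : Real.exp (-(k * m)) < 1 := by
      rw [Real.exp_lt_one_iff]
      have := mul_pos hkpos hm.1
      linarith
    linarith
  have hG0 : G 0 = 1 := by rw [hGk 0]; simp
  have hG1pos : 0 < G 1 := by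
    rw [hGk 1]
    have h1 : Real.exp (-(k * 1)) < 1 := by
      rw [Real.exp_lt_one_iff]; linarith
    have : 0 < (1 - Real.exp (-(k * 1))) / k := div_pos (by linarith) hkpos
    linarith
  have hG1lt : G 1 < 1 := by
    have := hanti (Set.mem_Icc.mpr ⟨le_refl 0, zero_le_one⟩)
      (Set.mem_Icc.mpr ⟨zero_le_one, le_refl 1⟩) zero_lt_one
    rw [hG0] at this; exact this
  -- the expression in the equation equals G m
  have hexpr : ∀ m : ℝ,
      1 - m + (Real.exp (α * (σ - 1) * m) - 1) / (α * (σ - 1)) = G m := by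
    intro m
    rw [hGk m]
    have harg : α * (σ - 1) * m = -(k * m) := by rw [hkdef]; ring
    rw [harg]
    have hks : α * (σ - 1) = -k := by rw [hkdef]; ring
    rw [hks, div_neg, ← neg_div, neg_sub]
  -- key equivalence
  have hkey : ∀ c m : ℝ, 1 < c →
      (c ^ (1 - σ) * (1 - m + (Real.exp (α * (σ - 1) * m) - 1) / (α * (σ - 1))) = 1
        ↔ G m = c ^ (σ - 1)) := by
    intro c m hc
    have hc0 : (0:ℝ) < c := lt_trans zero_lt_one hc
    have hpow : c ^ (σ - 1) = (c ^ (1 - σ) : ℝ)⁻¹ := by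
      rw [show σ - 1 = -(1 - σ) by ring, Real.rpow_neg hc0.le]
    have hppos : (0:ℝ) < c ^ (1 - σ) := Real.rpow_pos_of_pos hc0 _
    rw [hexpr m, hpow]
    constructor
    · intro h
      field_simp
      linarith [mul_comm (c ^ (1 - σ)) (G m) ▸ h]
    · intro h
      rw [h]
      field_simp
  have hclt1 : ∀ c : ℝ, 1 < c → c ^ (σ - 1) < 1 := fun c hc =>
    Real.rpow_lt_one_of_one_lt_of_neg hc (by linarith)
  refine ⟨hcont, hanti, hG0, ⟨hG1pos, hG1lt⟩, ?_, ?_⟩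
  · -- existence and uniqueness
    intro c hc hrange
    set t : ℝ := c ^ (σ - 1) with ht
    have ht1 : t < 1 := hclt1 c hc
    have : t ∈ Set.Icc (G 1) (G 0) := ⟨le_of_lt hrange, by rw [hG0]; linarith⟩
    obtain ⟨m, hm, hGm⟩ := intermediate_value_Icc' zero_le_one hcont this
    have hm0 : m ≠ 0 := by
      intro h; rw [h, hG0] at hGm; linarith
    have hm1 : m ≠ 1 := by
      intro h; rw [h] at hGm; rw [hGm] at hrange; exact lt_irrefl _ hrange
    have hmIoo : m ∈ Set.Ioo (0:ℝ) 1 :=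
      ⟨lt_of_le_of_ne hm.1 (Ne.symm hm0), lt_of_le_of_ne hm.2 hm1⟩
    refine ⟨m, ⟨hmIoo, (hkey c m hc).mpr hGm⟩, ?_⟩
    rintro m' ⟨hm'Ioo, hm'eq⟩
    have hGm' : G m' = t := (hkey c m' hc).mp hm'eq
    exact hanti.injOn (Set.mem_Icc_of_Ioo hm'Ioo) hm (hGm'.trans hGm.symm)
  · -- monotonicity
    intro c₁ c₂ m₁ m₂ hc₁ hc₁₂ _ _ hm₁ hm₂ heq₁ heq₂
    have hc₂ : 1 < c₂ := lt_trans hc₁ hc₁₂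
    have hc₁0 : (0:ℝ) < c₁ := lt_trans zero_lt_one hc₁
    have hc₂0 : (0:ℝ) < c₂ := lt_trans zero_lt_one hc₂
    have hG₁ : G m₁ = c₁ ^ (σ - 1) := (hkey c₁ m₁ hc₁).mp heq₁
    have hG₂ : G m₂ = c₂ ^ (σ - 1) := (hkey c₂ m₂ hc₂).mp heq₂
    have hlt : c₂ ^ (σ - 1) < c₁ ^ (σ - 1) := by
      have h1 : c₁ ^ (1 - σ) < c₂ ^ (1 - σ) :=
        Real.rpow_lt_rpow hc₁0.le hc₁₂ (by linarith)
      have hp1 : (0:ℝ) < c₁ ^ (1 - σ) := Real.rpow_pos_of_pos hc₁0 _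
      rw [show σ - 1 = -(1 - σ) by ring, Real.rpow_neg hc₁0.le, Real.rpow_neg hc₂0.le]
      exact (inv_strictAnti₀ hp1 h1 : _)
    have hGlt : G m₂ < G m₁ := by rw [hG₁, hG₂]; exact hlt
    by_contra hle
    push_neg at hle
    rcases eq_or_lt_of_le hle with heq | hlt'
    · rw [heq] at hGlt; exact lt_irrefl _ hGlt
    · have := hanti (Set.mem_Icc_of_Ioo hm₂) (Set.mem_Icc_of_Ioo hm₁) hlt'
      linarith
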